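/- Every unit of an object-free category (X,R) becomes a weak unit of the structure (X₀,R₀) obtained by adjoining a zero; hence every object-free category embeds into a weak coherent partial monoid with zero. -/
import Mathlib


/-- Relational associativity. -/
def RelAssoc {X : Type*} (R : X → X → X → Prop) : Prop :=
  ∀ u x y z : X, (∃ v, R u x v ∧ R v y z) ↔ (∃ v, R u v z ∧ R v x y)

/-- Definedness: `D R x y` iff the composite of `x` and `y` exists. -/
def D {X : Type*} (R : X → X → X → Prop) (x y : X) : Prop := ∃ z, R z x y

/-- Relational left unit. -/
def IsLUnit {X : Type*} (R : X → X → X → Prop) (e : X) : Prop :=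
  (∃ x, R x e x) ∧ ∀ x y, R y e x → y = x

/-- Relational right unit. -/
def IsRUnit {X : Type*} (R : X → X → X → Prop) (e : X) : Prop :=
  (∃ x, R x x e) ∧ ∀ x y, R y x e → y = x

/-- Relational unit: a left or a right unit. -/
def IsUnit' {X : Type*} (R : X → X → X → Prop) (e : X) : Prop :=
  IsLUnit R e ∨ IsRUnit R e

/-- Relational monoid: relationally associative, and every element has a left
unit composable on the left and a right unit composable on the right. -/
def RelMonoid {X : Type*} (R : X → X → X → Prop) : Prop :=
  RelAssoc R ∧ ∀ x, (∃ e, IsLUnit R e ∧ D R e x) ∧ (∃ e, IsRUnit R e ∧ D R x e)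

/-- Coherence. -/
def Coherent {X : Type*} (R : X → X → X → Prop) : Prop :=
  ∀ v x y z, R v x y → D R y z → D R v z

/-- Weak functionality: `R` is a partial operation. -/
def WFun {X : Type*} (R : X → X → X → Prop) : Prop :=
  ∀ x x' y z, R x y z → R x' y z → x = x'

/-- Adjunction of a zero element to a ternary relation: `none` is the new zero. -/
def Radj {X : Type*} (R : X → X → X → Prop) :
    Option X → Option X → Option X → Prop
  | some z, some x, some y => R z x y
  | some _, _, _ => False
  | none, some x, some y => ¬ D R x y
  | none, _, _ => True

theorem stmt17 {X : Type*} (R : X → X → X → Prop) (hM : RelMonoid R)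
    (hF : WFun R) (hC : Coherent R) (e : X) :
    (IsLUnit R e →
      (∃ x : Option X, Radj R x (some e) x) ∧
      ∀ x : Option X, Radj R x (some e) x ∨ Radj R none (some e) x) ∧
    (IsRUnit R e →
      (∃ x : Option X, Radj R x x (some e)) ∧
      ∀ x : Option X, Radj R x x (some e) ∨ Radj R none x (some e)) := by
  constructor
  · rintro ⟨⟨a, ha⟩, hu⟩
    refine ⟨⟨some a, ha⟩, ?_⟩
    rintro (_ | b)
    · exact Or.inr trivial
    · by_cases h : D R e b
      · obtain ⟨z, hz⟩ := h
        exact Or.inl (hu b z hz ▸ hz)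
      · exact Or.inr h
  · rintro ⟨⟨a, ha⟩, hu⟩
    refine ⟨⟨some a, ha⟩, ?_⟩
    rintro (_ | b)
    · exact Or.inr trivial
    · by_cases h : D R b e
      · obtain ⟨z, hz⟩ := h
        exact Or.inl (hu b z hz ▸ hz)
      · exact Or.inr h
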